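/- Let G be a group, H ≤ G a subgroup, and r : G → G a group homomorphism with r(G) = H and r(h) = h for all h ∈ H (a retraction onto H). Fix a prime p and define the Frattini-type series Φ¹(G) = G, Φ^{n+1}(G) = (Φⁿ(G))^p [Φⁿ(G), Φⁿ(G)], where K^p denotes the subgroup generated by p-th powers of elements of K. Then Φⁿ(H) = H ∩ Φⁿ(G) for all n ≥ 1. -/

import Mathlib

/-- The Frattini-type series: `Φ¹(G) = G` (index `0` here) and
`Φ^{n+1}(G) = Φⁿ(G)^p [Φⁿ(G), Φⁿ(G)]`. -/
def phiSeries (p : ℕ) (G : Type*) [Group G] : ℕ → Subgroup G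
  | 0 => ⊤
  | n + 1 =>
      Subgroup.closure ((fun x : G => x ^ p) '' (phiSeries p G n : Set G)) ⊔
        ⁅phiSeries p G n, phiSeries p G n⁆

/-- The one-step operator of the Frattini-type series. -/
def phiStep (p : ℕ) {G : Type*} [Group G] (K : Subgroup G) : Subgroup G :=
  Subgroup.closure ((fun x : G => x ^ p) '' (K : Set G)) ⊔ ⁅K, K⁆

lemma phiSeries_succ (p : ℕ) (G : Type*) [Group G] (n : ℕ) :
    phiSeries p G (n + 1) = phiStep p (phiSeries p G n) := rfl

lemma phiStep_map {G G' : Type*} [Group G] [Group G'] (p : ℕ) (f : G →* G')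
    (K : Subgroup G) : (phiStep p K).map f = phiStep p (K.map f) := by
  unfold phiStep
  rw [Subgroup.map_sup, MonoidHom.map_closure, Subgroup.map_commutator]
  congr 2
  rw [Subgroup.coe_map, Set.image_image, Set.image_image]
  simp [map_pow]

lemma phiStep_mono {G : Type*} [Group G] (p : ℕ) {K L : Subgroup G} (h : K ≤ L) :
    phiStep p K ≤ phiStep p L :=
  sup_le_sup (Subgroup.closure_mono (Set.image_mono h))
    (Subgroup.commutator_mono h h)

lemma phiStep_le_self {G : Type*} [Group G] (p : ℕ) (K : Subgroup G) :
    phiStep p K ≤ K := by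
  refine sup_le (Subgroup.closure_le _ |>.mpr ?_) (Subgroup.commutator_le.mpr ?_)
  · rintro x ⟨y, hy, rfl⟩
    exact K.pow_mem hy p
  · intro g hg h hh
    exact K.mul_mem (K.mul_mem (K.mul_mem hg hh) (K.inv_mem hg)) (K.inv_mem hh)

lemma map_phiSeries_le {G : Type*} [Group G] (p : ℕ) (f : G →* G) :
    ∀ n, (phiSeries p G n).map f ≤ phiSeries p G n := by
  intro n
  induction n with
  | zero => exact le_top
  | succ n ih =>
    rw [phiSeries_succ, phiStep_map]
    exact phiStep_mono p ih

/-- If `r : G → G` is a retraction onto a subgroup `H` (i.e. `r(G) = H` and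
`r` fixes `H` pointwise), then `Φⁿ(H) = H ∩ Φⁿ(G)` for all `n`. -/
theorem stmt_5 (G : Type*) [Group G] (H : Subgroup G) (p : ℕ) (hp : p.Prime)
    (r : G →* G) (hrange : r.range = H) (hfix : ∀ h ∈ H, r h = h) :
    ∀ n : ℕ, (phiSeries p H n).map H.subtype = H ⊓ phiSeries p G n := by
  intro n
  induction n with
  | zero =>
    show Subgroup.map H.subtype ⊤ = H ⊓ ⊤
    rw [← MonoidHom.range_eq_map, Subgroup.range_subtype, inf_top_eq]
  | succ n ih =>
    rw [phiSeries_succ, phiStep_map, ih]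
    apply le_antisymm
    · refine le_inf ((phiStep_le_self p _).trans inf_le_left) ?_
      rw [phiSeries_succ]
      exact phiStep_mono p inf_le_right
    · rintro g ⟨hgH, hgΦ⟩
      have hmap : (phiSeries p G n).map r ≤ H ⊓ phiSeries p G n := by
        refine le_inf ?_ (map_phiSeries_le p r n)
        rintro x ⟨y, _, rfl⟩
        rw [← hrange]; exact ⟨y, rfl⟩
      have : r g ∈ phiStep p (H ⊓ phiSeries p G n) := by
        refine phiStep_mono p hmap ?_
        rw [← phiStep_map, ← phiSeries_succ]
        exact ⟨g, hgΦ, rfl⟩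
      rwa [hfix g hgH] at this
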